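/- Let F be a family of subsets of a finite set U with indicator function f, and fix k ≥ 1. Define c(Y) as the number of k-tuples (S₁,…,S_k) with each Sᵢ ∈ F, Sᵢ ⊆ Y, and S₁ ∪ ⋯ ∪ S_k = Y. Then for every Y ⊆ U, ∑_{X ⊆ Y} c(X) = (∑_{S ⊆ Y} f(S))^k, i.e. the zeta transform of the cover number equals the k-th power of the zeta transform of f. -/

import Mathlib

theorem zeta_of_cover_number_eq_pow {α : Type*} [Fintype α] [DecidableEq α]
    (F : Finset (Finset α)) (k : ℕ) (hk : 1 ≤ k) (Y : Finset α) :
    ∑ X ∈ Y.powerset, Nat.card {t : Fin k → Finset α //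
        (∀ i, t i ∈ F) ∧ (∀ i, t i ⊆ X) ∧ Finset.univ.sup t = X}
    = ((Y.powerset.filter (· ∈ F)).card) ^ k := by
  classical
  set B : Finset (Finset α) := Y.powerset.filter (· ∈ F) with hB
  set A : Finset (Fin k → Finset α) :=
    Finset.univ.filter (fun t => (∀ i, t i ∈ F) ∧ (∀ i, t i ⊆ Y)) with hA
  have hAcard : A.card = B.card ^ k := by
    have : A = Fintype.piFinset (fun _ : Fin k => B) := by
      ext t
      simp [hA, hB, Finset.mem_powerset, forall_and, and_comm]
    rw [this, Fintype.card_piFinset]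
    simp
  have hfib : A.card = ∑ X ∈ Y.powerset, (A.filter (fun t => Finset.univ.sup t = X)).card := by
    apply Finset.card_eq_sum_card_fiberwise
    intro t ht
    simp only [Finset.mem_coe, hA, Finset.mem_filter, Finset.mem_univ, true_and] at ht
    simp only [Finset.mem_coe, Finset.mem_powerset]
    exact Finset.sup_le fun i _ => ht.2 i
  rw [← hAcard, hfib]
  apply Finset.sum_congr rfl
  intro X hX
  rw [Finset.mem_powerset] at hX
  rw [Nat.card_eq_fintype_card, Fintype.card_subtype]
  congr 1
  ext t
  simp only [hA, Finset.mem_filter, Finset.mem_univ, true_and]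
  constructor
  · rintro ⟨hF, hsub, hsup⟩
    refine ⟨⟨hF, fun i => ?_⟩, hsup⟩
    exact (hsub i).trans hX
  · rintro ⟨⟨hF, _⟩, hsup⟩
    refine ⟨hF, fun i => ?_, hsup⟩
    rw [← hsup]; exact Finset.le_sup (f := t) (Finset.mem_univ i)
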